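/- arXiv:0909.3467 — 2 statements merged into one kernel-verified Lean document; each statement's English description precedes it below -/
import Mathlib

section
/- Let p ≥ 1/2 and define N(u)_j = |u_j|^{2p}u_j on ℓ²(ℤⁿ, ℝ). Then N is Fréchet differentiable at every u ∈ ℓ², with derivative N'(u)[h]_j = (2p+1)|u_j|^{2p} h_j, and the operator norm satisfies ‖N'(u)‖_{L(ℓ²,ℓ²)} ≤ C_p ‖u‖_{ℓ²}^{2p} for a constant C_p depending only on p. -/
open Real Filter

private lemma hasDerivAt_abs_rpow_mul {q : ℝ} (hq : 1 ≤ q) (t : ℝ) :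
    HasDerivAt (fun s : ℝ => |s| ^ q * s) ((q + 1) * |t| ^ q) t := by
  have hq0 : q ≠ 0 := by linarith
  rcases eq_or_ne t 0 with rfl | ht
  · have h0 : (q + 1) * |(0:ℝ)| ^ q = 0 := by simp [Real.zero_rpow hq0]
    rw [h0, hasDerivAt_iff_tendsto_slope]
    have hc : ContinuousAt (fun x : ℝ => x ^ q) |0| := by
      rw [abs_zero]
      exact Real.continuousAt_rpow_const 0 q (Or.inr (by linarith))
    have hc2 : Tendsto (fun s : ℝ => |s| ^ q) (nhds 0) (nhds 0) := by
      have := hc.comp (continuous_abs.continuousAt (x := (0:ℝ)))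
      simpa [Function.comp_def, Real.zero_rpow hq0] using this.tendsto
    refine Filter.Tendsto.congr' ?_ (hc2.mono_left nhdsWithin_le_nhds)
    filter_upwards [self_mem_nhdsWithin] with s hs
    have hs' : (s : ℝ) ≠ 0 := hs
    rw [slope_def_field]
    field_simp
    simp
  · have habs : HasDerivAt (fun s : ℝ => |s|) ((SignType.sign t : ℝ)) t := hasDerivAt_abs ht
    have h1 : HasDerivAt (fun s : ℝ => |s| ^ q)
        (q * |t| ^ (q - 1) * (SignType.sign t : ℝ)) t := by
      have h := Real.hasDerivAt_rpow_const (x := |t|) (p := q) (Or.inl (abs_ne_zero.2 ht))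
      exact h.comp t habs
    have h2 := h1.mul (hasDerivAt_id t)
    refine h2.congr_deriv ?_
    symm
    have hst : (SignType.sign t : ℝ) * t = |t| := by
      rcases lt_or_gt_of_ne ht with h | h
      · simp [sign_neg h, abs_of_neg h]
      · simp [sign_pos h, abs_of_pos h]
    have hpow : |t| ^ (q - 1) * |t| = |t| ^ q := by
      rw [← Real.rpow_add_one (abs_ne_zero.2 ht)]; ring_nf
    calc (q + 1) * |t| ^ q
        = q * |t| ^ (q - 1) * ((SignType.sign t : ℝ) * t) + |t| ^ q * 1 := by
          rw [hst, mul_assoc q, hpow]; ring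
      _ = q * |t| ^ (q - 1) * (SignType.sign t : ℝ) * id t + |t| ^ q * 1 := by
          simp only [id_eq, mul_assoc]

private lemma abs_rpow_sub_rpow_le' {q : ℝ} (hq : 1 ≤ q) {x y : ℝ} (hy : 0 ≤ y)
    (hyx : y ≤ x) : |x ^ q - y ^ q| ≤ q * x ^ (q - 1) * |x - y| := by
  have bound : ∀ s ∈ Set.Icc y x, ‖q * s ^ (q - 1)‖ ≤ q * x ^ (q - 1) := by
    intro s hs
    have hs0 : 0 ≤ s := le_trans hy hs.1
    have h1 : s ^ (q - 1) ≤ x ^ (q - 1) :=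
      Real.rpow_le_rpow hs0 hs.2 (by linarith)
    have h2 : 0 ≤ s ^ (q - 1) := Real.rpow_nonneg hs0 _
    have hq0 : (0:ℝ) ≤ q := by linarith
    rw [Real.norm_eq_abs, abs_of_nonneg (by positivity)]
    exact mul_le_mul_of_nonneg_left h1 hq0
  have key := Convex.norm_image_sub_le_of_norm_hasDerivWithin_le
    (f := fun s : ℝ => s ^ q) (f' := fun s : ℝ => q * s ^ (q - 1)) (s := Set.Icc y x)
    (fun s _ => (Real.hasDerivAt_rpow_const (Or.inr hq)).hasDerivWithinAt)
    bound (convex_Icc y x) (Set.left_mem_Icc.2 hyx) (Set.right_mem_Icc.2 hyx)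
  simpa [Real.norm_eq_abs] using key

private lemma abs_rpow_sub_rpow_le {q : ℝ} (hq : 1 ≤ q) {x y : ℝ} (hx : 0 ≤ x) (hy : 0 ≤ y) :
    |x ^ q - y ^ q| ≤ q * (max x y) ^ (q - 1) * |x - y| := by
  rcases le_total y x with h | h
  · rw [max_eq_left h]; exact abs_rpow_sub_rpow_le' hq hy h
  · rw [max_eq_right h, abs_sub_comm (x ^ q), abs_sub_comm x]
    exact abs_rpow_sub_rpow_le' hq hx h

private lemma pointwise_bound {q : ℝ} (hq : 1 ≤ q) (a b : ℝ) :
    |(|a + b| ^ q * (a + b) - |a| ^ q * a - (q + 1) * |a| ^ q * b)| ≤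
      (q + 1) * q * (|a| + |b|) ^ (q - 1) * b ^ 2 := by
  have hq1 : (0:ℝ) < q + 1 := by linarith
  have hg : ∀ t : ℝ, HasDerivAt (fun t : ℝ => |t| ^ q * t - (q + 1) * |a| ^ q * t)
      ((q + 1) * |t| ^ q - (q + 1) * |a| ^ q) t := fun t => by
    exact ((hasDerivAt_abs_rpow_mul hq t).sub
      ((hasDerivAt_id t).const_mul ((q + 1) * |a| ^ q))).congr_deriv (by simp)
  have hCb : ∀ t ∈ Set.Icc (min a (a + b)) (max a (a + b)),
      ‖(q + 1) * |t| ^ q - (q + 1) * |a| ^ q‖ ≤ (q + 1) * q * (|a| + |b|) ^ (q - 1) * |b| := by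
    intro t ht
    have h1 : |t - a| ≤ |b| := by
      have hmin : a - |b| ≤ min a (a + b) :=
        le_min (by linarith [abs_nonneg b]) (by linarith [neg_abs_le b])
      have hmax : max a (a + b) ≤ a + |b| :=
        max_le (by linarith [abs_nonneg b]) (by linarith [le_abs_self b])
      rw [abs_le]
      exact ⟨by linarith [ht.1], by linarith [ht.2]⟩
    have habs : |(|t| - |a|)| ≤ |b| := le_trans (abs_abs_sub_abs_le_abs_sub t a) h1
    have hmax2 : max |t| |a| ≤ |a| + |b| := by
      refine max_le ?_ (by linarith [abs_nonneg b])
      have h2 := abs_sub_abs_le_abs_sub t a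
      linarith
    have key : |(|t| ^ q - |a| ^ q)| ≤ q * (|a| + |b|) ^ (q - 1) * |b| := by
      have k1 := abs_rpow_sub_rpow_le hq (abs_nonneg t) (abs_nonneg a)
      have k2 : (max |t| |a|) ^ (q - 1) ≤ (|a| + |b|) ^ (q - 1) :=
        Real.rpow_le_rpow (le_trans (abs_nonneg t) (le_max_left _ _)) hmax2 (by linarith)
      have k3 : (0:ℝ) ≤ (max |t| |a|) ^ (q - 1) :=
        Real.rpow_nonneg (le_trans (abs_nonneg t) (le_max_left _ _)) _
      have hq0 : (0:ℝ) ≤ q := by linarith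
      calc |(|t| ^ q - |a| ^ q)| ≤ q * (max |t| |a|) ^ (q - 1) * |(|t| - |a|)| := k1
        _ ≤ q * (|a| + |b|) ^ (q - 1) * |b| := by
            apply mul_le_mul (mul_le_mul_of_nonneg_left k2 hq0) habs (abs_nonneg _)
            positivity
    have hfac : (q + 1) * |t| ^ q - (q + 1) * |a| ^ q = (q + 1) * (|t| ^ q - |a| ^ q) := by ring
    rw [Real.norm_eq_abs, hfac, abs_mul, abs_of_pos hq1]
    calc (q + 1) * |(|t| ^ q - |a| ^ q)| ≤ (q + 1) * (q * (|a| + |b|) ^ (q - 1) * |b|) :=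
          mul_le_mul_of_nonneg_left key (le_of_lt hq1)
      _ = (q + 1) * q * (|a| + |b|) ^ (q - 1) * |b| := by ring
  have mvt := Convex.norm_image_sub_le_of_norm_hasDerivWithin_le
    (fun t _ => (hg t).hasDerivWithinAt) hCb (convex_Icc _ _)
    ⟨min_le_left _ _, le_max_left _ _⟩ ⟨min_le_right _ _, le_max_right _ _⟩
  rw [Real.norm_eq_abs, Real.norm_eq_abs] at mvt
  have e1 : |a + b| ^ q * (a + b) - |a| ^ q * a - (q + 1) * |a| ^ q * b
      = (|a + b| ^ q * (a + b) - (q + 1) * |a| ^ q * (a + b))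
        - (|a| ^ q * a - (q + 1) * |a| ^ q * a) := by ring
  rw [e1]
  refine le_trans mvt ?_
  have e2 : a + b - a = b := by ring
  rw [e2, mul_assoc ((q + 1) * q * (|a| + |b|) ^ (q - 1))]
  rw [abs_mul_abs_self, ← pow_two]

private lemma abs_le_sqrt_tsum {ι : Type*} {f : ι → ℝ} (hf : Summable fun j => (f j) ^ 2)
    (j : ι) : |f j| ≤ Real.sqrt (∑' i, (f i) ^ 2) := by
  have h1 : (f j) ^ 2 ≤ ∑' i, (f i) ^ 2 := hf.le_tsum j (fun i _ => sq_nonneg _)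
  calc |f j| = Real.sqrt ((f j) ^ 2) := (Real.sqrt_sq_eq_abs _).symm
    _ ≤ _ := Real.sqrt_le_sqrt h1

private lemma sqrt_tsum_le {ι : Type*} {f g : ι → ℝ} {K : ℝ} (hK : 0 ≤ K)
    (hg : Summable fun j => (g j) ^ 2) (hfg : ∀ j, |f j| ≤ K * |g j|) :
    Real.sqrt (∑' j, (f j) ^ 2) ≤ K * Real.sqrt (∑' j, (g j) ^ 2) := by
  have hsq : ∀ j, (f j) ^ 2 ≤ K ^ 2 * (g j) ^ 2 := fun j => by
    calc (f j) ^ 2 = |f j| ^ 2 := (sq_abs _).symm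
      _ ≤ (K * |g j|) ^ 2 := pow_le_pow_left₀ (abs_nonneg _) (hfg j) 2
      _ = K ^ 2 * (g j) ^ 2 := by rw [mul_pow, sq_abs]
  have hsf : Summable fun j => (f j) ^ 2 :=
    Summable.of_nonneg_of_le (fun j => sq_nonneg _) hsq (hg.mul_left _)
  have hts : ∑' j, (f j) ^ 2 ≤ K ^ 2 * ∑' j, (g j) ^ 2 := by
    rw [← tsum_mul_left]
    exact Summable.tsum_le_tsum hsq hsf (hg.mul_left _)
  calc Real.sqrt (∑' j, (f j) ^ 2) ≤ Real.sqrt (K ^ 2 * ∑' j, (g j) ^ 2) :=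
        Real.sqrt_le_sqrt hts
    _ = K * Real.sqrt (∑' j, (g j) ^ 2) := by
        rw [Real.sqrt_mul (sq_nonneg K), Real.sqrt_sq hK]

/-- For `p ≥ 1/2`, the map `N(u)_j = |u_j|^{2p} u_j` on `ℓ²(ℤⁿ, ℝ)` is
Fréchet differentiable at every `u`, with derivative `N'(u)[h]_j = (2p+1)|u_j|^{2p} h_j`
(expressed via the o(‖h‖) characterization), and
`‖N'(u)‖_{L(ℓ²,ℓ²)} ≤ C_p ‖u‖_{ℓ²}^{2p}` with `C_p` depending only on `p`. -/
theorem stmt_8 (n : ℕ) (p : ℝ) (hp : 1 / 2 ≤ p) :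
    ∃ C > 0, ∀ u : (Fin n → ℤ) → ℝ, Summable (fun j => (u j) ^ 2) →
      (∀ h : (Fin n → ℤ) → ℝ, Summable (fun j => (h j) ^ 2) →
        Real.sqrt (∑' j, ((2 * p + 1) * |u j| ^ (2 * p) * h j) ^ 2) ≤
          C * (Real.sqrt (∑' j, (u j) ^ 2)) ^ (2 * p) * Real.sqrt (∑' j, (h j) ^ 2)) ∧
      (∀ ε > 0, ∃ δ > 0, ∀ h : (Fin n → ℤ) → ℝ, Summable (fun j => (h j) ^ 2) →
        Real.sqrt (∑' j, (h j) ^ 2) < δ →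
        Real.sqrt (∑' j, (|u j + h j| ^ (2 * p) * (u j + h j) - |u j| ^ (2 * p) * u j -
            (2 * p + 1) * |u j| ^ (2 * p) * h j) ^ 2) ≤
          ε * Real.sqrt (∑' j, (h j) ^ 2)) := by
  have hq : (1:ℝ) ≤ 2 * p := by linarith
  have hq0 : (0:ℝ) ≤ 2 * p := by linarith
  have hq1 : (0:ℝ) < 2 * p + 1 := by linarith
  refine ⟨2 * p + 1, hq1, fun u hu => ?_⟩
  set M := Real.sqrt (∑' j, (u j) ^ 2) with hM
  have hM0 : 0 ≤ M := Real.sqrt_nonneg _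
  constructor
  · intro h hh
    have hfg : ∀ j, |(2 * p + 1) * |u j| ^ (2 * p) * h j| ≤ ((2 * p + 1) * M ^ (2 * p)) * |h j| := by
      intro j
      have h1 : |u j| ^ (2 * p) ≤ M ^ (2 * p) :=
        Real.rpow_le_rpow (abs_nonneg _) (abs_le_sqrt_tsum hu j) hq0
      rw [abs_mul, abs_mul, abs_of_pos hq1,
        abs_of_nonneg (Real.rpow_nonneg (abs_nonneg _) _)]
      exact mul_le_mul_of_nonneg_right
        (mul_le_mul_of_nonneg_left h1 (le_of_lt hq1)) (abs_nonneg _)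
    have hKnn : 0 ≤ (2 * p + 1) * M ^ (2 * p) :=
      mul_nonneg (le_of_lt hq1) (Real.rpow_nonneg hM0 _)
    have := sqrt_tsum_le hKnn hh hfg
    calc Real.sqrt (∑' j, ((2 * p + 1) * |u j| ^ (2 * p) * h j) ^ 2)
        ≤ (2 * p + 1) * M ^ (2 * p) * Real.sqrt (∑' j, (h j) ^ 2) := this
      _ = (2 * p + 1) * M ^ (2 * p) * Real.sqrt (∑' j, (h j) ^ 2) := rfl
  · intro ε hε
    have hA0 : 0 < (2 * p + 1) * (2 * p) * (M + 1) ^ (2 * p - 1) := by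
      have h1 : (0:ℝ) < (M + 1) ^ (2 * p - 1) := Real.rpow_pos_of_pos (by linarith) _
      have h2 : (0:ℝ) < 2 * p := by linarith
      exact mul_pos (mul_pos hq1 h2) h1
    set A := (2 * p + 1) * (2 * p) * (M + 1) ^ (2 * p - 1) with hAdef
    refine ⟨min 1 (ε / A), lt_min one_pos (div_pos hε hA0), fun h hh hsmall => ?_⟩
    set Hn := Real.sqrt (∑' j, (h j) ^ 2) with hHn
    have hHn0 : 0 ≤ Hn := Real.sqrt_nonneg _
    have hH1 : Hn < 1 := lt_of_lt_of_le hsmall (min_le_left _ _)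
    have hHe : Hn < ε / A := lt_of_lt_of_le hsmall (min_le_right _ _)
    set K := (2 * p + 1) * (2 * p) * (M + Hn) ^ (2 * p - 1) * Hn with hKdef
    have hXnn : 0 ≤ (M + Hn) ^ (2 * p - 1) := Real.rpow_nonneg (by linarith) _
    have hKnn : 0 ≤ K := by
      rw [hKdef]
      have : (0:ℝ) ≤ (2 * p + 1) * (2 * p) := by nlinarith
      exact mul_nonneg (mul_nonneg this hXnn) hHn0
    have hfg : ∀ j, |(|u j + h j| ^ (2 * p) * (u j + h j) - |u j| ^ (2 * p) * u j -
        (2 * p + 1) * |u j| ^ (2 * p) * h j)| ≤ K * |h j| := by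
      intro j
      have h1 := pointwise_bound hq (u j) (h j)
      have h2 : (|u j| + |h j|) ^ (2 * p - 1) ≤ (M + Hn) ^ (2 * p - 1) :=
        Real.rpow_le_rpow (by positivity)
          (add_le_add (abs_le_sqrt_tsum hu j) (abs_le_sqrt_tsum hh j)) (by linarith)
      have h3 : (h j) ^ 2 ≤ Hn * |h j| := by
        rw [pow_two, ← abs_mul_abs_self]
        exact mul_le_mul_of_nonneg_right (abs_le_sqrt_tsum hh j) (abs_nonneg _)
      have hc1 : (0:ℝ) ≤ (2 * p + 1) * (2 * p) := by nlinarith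
      refine h1.trans ?_
      calc (2 * p + 1) * (2 * p) * (|u j| + |h j|) ^ (2 * p - 1) * (h j) ^ 2
          ≤ (2 * p + 1) * (2 * p) * (M + Hn) ^ (2 * p - 1) * (Hn * |h j|) :=
            mul_le_mul (mul_le_mul_of_nonneg_left h2 hc1) h3 (sq_nonneg _)
              (mul_nonneg hc1 hXnn)
        _ = K * |h j| := by rw [hKdef]; ring
    have hKε : K ≤ ε := by
      have h5 : (M + Hn) ^ (2 * p - 1) ≤ (M + 1) ^ (2 * p - 1) :=
        Real.rpow_le_rpow (by linarith) (by linarith) (by linarith)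
      have hc1 : (0:ℝ) ≤ (2 * p + 1) * (2 * p) := by nlinarith
      have h6 : K ≤ A * Hn := by
        rw [hKdef, hAdef]
        exact mul_le_mul_of_nonneg_right (mul_le_mul_of_nonneg_left h5 hc1) hHn0
      have h7 : A * Hn ≤ ε := by
        rw [mul_comm]
        exact (le_div_iff₀ hA0).1 hHe.le
      linarith
    exact (sqrt_tsum_le hKnn hh hfg).trans (mul_le_mul_of_nonneg_right hKε hHn0)
end

section
/- (Quantitative implicit function theorem with a small perturbation.) Let X, Z be Banach spaces, U ⊂ X open, I = (0, μ₀) ⊂ ℝ. Suppose F₀ : U × I → Z is C¹ with: (i) a family x₀(μ) ∈ U with F₀(x₀(μ), μ) = 0; (ii) ‖∂ₓF₀(x,μ) − ∂ₓF₀(x₀(μ),μ)‖ ≤ L‖x − x₀(μ)‖ uniformly in μ; (iii) ∂ₓF₀(x₀(μ),μ) invertible with ‖[∂ₓF₀(x₀(μ),μ)]⁻¹‖ ≤ C₁ uniformly in μ. Suppose F₁ : U × I → Z is C¹ with ‖F₁(x,μ)‖ ≤ C₂μ^α and ‖∂ₓF₁(x,μ)‖ ≤ C₃μ^β for some α, β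 > 0, uniformly on U × I. Then there exist δ > 0 and μ* ∈ (0, μ₀) and, for each μ ∈ (0, μ*), a point x(μ) with F₀(x(μ),μ) + F₁(x(μ),μ) = 0 and ‖x(μ) − x₀(μ)‖_X ≤ C μ^α. -/
/-- quantitative implicit function theorem with a small perturbation.
`F₀(x₀(μ), μ) = 0`, `∂ₓF₀` Lipschitz uniformly in `μ`, `∂ₓF₀(x₀(μ),μ)` invertible with
uniformly bounded inverse, and `‖F₁‖ ≤ C₂μ^α`, `‖∂ₓF₁‖ ≤ C₃μ^β`. Then for all small `μ`
there is `x(μ)` with `(F₀+F₁)(x(μ),μ) = 0` and `‖x(μ) − x₀(μ)‖ ≤ Cμ^α`. -/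
theorem stmt_15 {X Z : Type*} [NormedAddCommGroup X] [NormedSpace ℝ X] [CompleteSpace X]
    [NormedAddCommGroup Z] [NormedSpace ℝ Z] [CompleteSpace Z]
    (U : Set X) (hU : IsOpen U) (μ₀ : ℝ) (hμ₀ : 0 < μ₀)
    (F₀ F₁ : X → ℝ → Z) (DF₀ DF₁ : X → ℝ → X →L[ℝ] Z)
    (x₀ : ℝ → X) (δ₀ L C₁ C₂ C₃ α β : ℝ)
    (hδ₀ : 0 < δ₀) (hα : 0 < α) (hβ : 0 < β)
    (hball : ∀ μ ∈ Set.Ioo (0 : ℝ) μ₀, Metric.ball (x₀ μ) δ₀ ⊆ U)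
    (hDF₀ : ∀ μ ∈ Set.Ioo (0 : ℝ) μ₀, ∀ x ∈ U, HasFDerivAt (fun y => F₀ y μ) (DF₀ x μ) x)
    (hDF₁ : ∀ μ ∈ Set.Ioo (0 : ℝ) μ₀, ∀ x ∈ U, HasFDerivAt (fun y => F₁ y μ) (DF₁ x μ) x)
    (hzero : ∀ μ ∈ Set.Ioo (0 : ℝ) μ₀, F₀ (x₀ μ) μ = 0)
    (hLip : ∀ μ ∈ Set.Ioo (0 : ℝ) μ₀, ∀ x ∈ U,
      ‖DF₀ x μ - DF₀ (x₀ μ) μ‖ ≤ L * ‖x - x₀ μ‖)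
    (Li : ℝ → Z →L[ℝ] X)
    (hLi : ∀ μ ∈ Set.Ioo (0 : ℝ) μ₀,
      (Li μ).comp (DF₀ (x₀ μ) μ) = ContinuousLinearMap.id ℝ X ∧
      (DF₀ (x₀ μ) μ).comp (Li μ) = ContinuousLinearMap.id ℝ Z ∧ ‖Li μ‖ ≤ C₁)
    (hF₁ : ∀ μ ∈ Set.Ioo (0 : ℝ) μ₀, ∀ x ∈ U, ‖F₁ x μ‖ ≤ C₂ * μ ^ α)
    (hDF₁b : ∀ μ ∈ Set.Ioo (0 : ℝ) μ₀, ∀ x ∈ U, ‖DF₁ x μ‖ ≤ C₃ * μ ^ β) :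
    ∃ μ' ∈ Set.Ioo (0 : ℝ) μ₀, ∃ C > 0, ∀ μ ∈ Set.Ioo (0 : ℝ) μ', ∃ x ∈ U,
      F₀ x μ + F₁ x μ = 0 ∧ ‖x - x₀ μ‖ ≤ C * μ ^ α := by
  classical
  set K₁ := max C₁ 0 with hK₁def
  set K₂ := max C₂ 0 with hK₂def
  set K₃ := max C₃ 0 with hK₃def
  set L' := max L 0 with hL'def
  have hK₁0 : (0:ℝ) ≤ K₁ := le_max_right _ _
  have hK₂0 : (0:ℝ) ≤ K₂ := le_max_right _ _
  have hK₃0 : (0:ℝ) ≤ K₃ := le_max_right _ _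
  have hL'0 : (0:ℝ) ≤ L' := le_max_right _ _
  set C := 2 * K₁ * K₂ + 1 with hCdef
  have hC : (0:ℝ) < C := by positivity
  -- rpow tends to 0 as μ → 0⁺
  have hrp : ∀ γ : ℝ, 0 < γ →
      Filter.Tendsto (fun μ : ℝ => μ ^ γ) (nhdsWithin 0 (Set.Ioi 0)) (nhds 0) := by
    intro γ hγ
    have h := (Real.continuousAt_rpow_const 0 γ (Or.inr hγ.le)).continuousWithinAt
      (s := Set.Ioi (0:ℝ))
    simpa [ContinuousWithinAt, Real.zero_rpow hγ.ne'] using h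
  have h1 : Filter.Tendsto (fun μ : ℝ => C * μ ^ α) (nhdsWithin 0 (Set.Ioi 0)) (nhds 0) := by
    simpa using (hrp α hα).const_mul C
  have h2 : Filter.Tendsto (fun μ : ℝ => K₁ * (L' * (C * μ ^ α) + K₃ * μ ^ β))
      (nhdsWithin 0 (Set.Ioi 0)) (nhds 0) := by
    have h := ((h1.const_mul L').add ((hrp β hβ).const_mul K₃)).const_mul K₁
    simpa using h
  have hev : ∀ᶠ μ in nhdsWithin (0:ℝ) (Set.Ioi 0),
      C * μ ^ α < δ₀ ∧ K₁ * (L' * (C * μ ^ α) + K₃ * μ ^ β) ≤ 1/2 := by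
    filter_upwards [h1.eventually_lt_const hδ₀,
      h2.eventually_le_const (by norm_num : (0:ℝ) < 1/2)] with μ ha hb
    exact ⟨ha, hb⟩
  obtain ⟨ε, hε, hεsub⟩ := (nhdsGT_basis (0:ℝ)).eventually_iff.mp hev
  refine ⟨min (ε/2) (μ₀/2), ⟨by positivity, lt_of_le_of_lt (min_le_right _ _) (by linarith)⟩,
    C, hC, ?_⟩
  intro μ hμ
  have hμpos : 0 < μ := hμ.1
  have hμI : μ ∈ Set.Ioo (0:ℝ) μ₀ :=
    ⟨hμpos, lt_of_lt_of_le hμ.2 ((min_le_right _ _).trans (by linarith))⟩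
  obtain ⟨hPδ, hPκ⟩ := hεsub ⟨hμpos, lt_of_lt_of_le hμ.2 ((min_le_left _ _).trans (by linarith))⟩
  have hμα : 0 < μ ^ α := Real.rpow_pos_of_pos hμpos α
  have hμβ : 0 < μ ^ β := Real.rpow_pos_of_pos hμpos β
  set c := x₀ μ with hcdef
  set r := C * μ ^ α with hrdef
  have hr : 0 < r := by positivity
  have hsU : Metric.closedBall c r ⊆ U :=
    (Metric.closedBall_subset_ball hPδ).trans (hball μ hμI)
  have hcU : c ∈ U := hsU (Metric.mem_closedBall_self hr.le)
  obtain ⟨hLi1, hLi2, hLi3⟩ := hLi μ hμI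
  have hLinorm : ‖Li μ‖ ≤ K₁ := hLi3.trans (le_max_left _ _)
  set A : X → X := fun y => y - Li μ (F₀ y μ + F₁ y μ) with hAdef
  set A' : X → X →L[ℝ] X := fun x => (Li μ).comp (DF₀ c μ - DF₀ x μ - DF₁ x μ) with hA'def
  have hid : ∀ v : X, Li μ (DF₀ c μ v) = v := by
    intro v
    have := DFunLike.congr_fun hLi1 v
    simpa using this
  have hA'deriv : ∀ x ∈ U, HasFDerivAt A (A' x) x := by
    intro x hx
    have h := (hDF₀ μ hμI x hx).add (hDF₁ μ hμI x hx)
    have h2 : HasFDerivAt (fun y => Li μ (F₀ y μ + F₁ y μ))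
        ((Li μ).comp (DF₀ x μ + DF₁ x μ)) x := (Li μ).hasFDerivAt.comp x h
    have h3 := (hasFDerivAt_id x).sub h2
    refine h3.congr_fderiv ?_
    ext v
    simp only [hA'def, ContinuousLinearMap.coe_comp', Function.comp_apply,
      ContinuousLinearMap.coe_sub', Pi.sub_apply, ContinuousLinearMap.add_apply,
      map_sub, map_add, ContinuousLinearMap.coe_id', id_eq, hid]
    abel
  set κ := K₁ * (L' * r + K₃ * μ ^ β) with hκdef
  have hκ0 : 0 ≤ κ := by positivity
  have hκhalf : κ ≤ 1/2 := hPκ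
  have hbound : ∀ x ∈ Metric.closedBall c r, ‖A' x‖ ≤ κ := by
    intro x hx
    have hxU := hsU hx
    have hxr : ‖x - c‖ ≤ r := mem_closedBall_iff_norm.mp hx
    have h1 : ‖DF₀ c μ - DF₀ x μ - DF₁ x μ‖ ≤ L' * r + K₃ * μ ^ β := by
      have e1 : ‖DF₀ c μ - DF₀ x μ - DF₁ x μ‖ ≤ ‖DF₀ c μ - DF₀ x μ‖ + ‖DF₁ x μ‖ :=
        norm_sub_le _ _
      have e2 : ‖DF₀ c μ - DF₀ x μ‖ = ‖DF₀ x μ - DF₀ c μ‖ := norm_sub_rev _ _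
      have e3 : ‖DF₀ x μ - DF₀ c μ‖ ≤ L * ‖x - c‖ := hLip μ hμI x hxU
      have e4 : ‖DF₁ x μ‖ ≤ C₃ * μ ^ β := hDF₁b μ hμI x hxU
      have e5 : L * ‖x - c‖ ≤ L' * r :=
        (mul_le_mul_of_nonneg_right (le_max_left _ _) (norm_nonneg _)).trans
          (mul_le_mul_of_nonneg_left hxr hL'0)
      have e6 : C₃ * μ ^ β ≤ K₃ * μ ^ β :=
        mul_le_mul_of_nonneg_right (le_max_left _ _) hμβ.le
      linarith
    calc ‖A' x‖ ≤ ‖Li μ‖ * ‖DF₀ c μ - DF₀ x μ - DF₁ x μ‖ :=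
          (Li μ).opNorm_comp_le _
      _ ≤ κ := mul_le_mul hLinorm h1 (norm_nonneg _) hK₁0
  have hAlip : ∀ x ∈ Metric.closedBall c r, ∀ y ∈ Metric.closedBall c r,
      ‖A y - A x‖ ≤ κ * ‖y - x‖ := by
    intro x hx y hy
    exact (convex_closedBall c r).norm_image_sub_le_of_norm_hasFDerivWithin_le
      (fun z hz => (hA'deriv z (hsU hz)).hasFDerivWithinAt) hbound hx hy
  have hAc : ‖A c - c‖ ≤ K₁ * (K₂ * μ ^ α) := by
    have e0 : A c - c = -(Li μ (F₁ c μ)) := by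
      simp [hAdef, hcdef, hzero μ hμI]
    rw [e0, norm_neg]
    have e1 : ‖Li μ (F₁ c μ)‖ ≤ ‖Li μ‖ * ‖F₁ c μ‖ := (Li μ).le_opNorm _
    have e2 : ‖F₁ c μ‖ ≤ K₂ * μ ^ α :=
      (hF₁ μ hμI c hcU).trans (mul_le_mul_of_nonneg_right (le_max_left _ _) hμα.le)
    calc ‖Li μ (F₁ c μ)‖ ≤ ‖Li μ‖ * ‖F₁ c μ‖ := e1
      _ ≤ K₁ * (K₂ * μ ^ α) := mul_le_mul hLinorm e2 (norm_nonneg _) hK₁0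
  have hmaps : Set.MapsTo A (Metric.closedBall c r) (Metric.closedBall c r) := by
    intro x hx
    have hxr : ‖x - c‖ ≤ r := mem_closedBall_iff_norm.mp hx
    have h1 : ‖A x - A c‖ ≤ κ * ‖x - c‖ := hAlip c (Metric.mem_closedBall_self hr.le) x hx
    have h2 : ‖A x - c‖ ≤ ‖A x - A c‖ + ‖A c - c‖ := by
      calc ‖A x - c‖ = ‖(A x - A c) + (A c - c)‖ := by rw [sub_add_sub_cancel]
        _ ≤ ‖A x - A c‖ + ‖A c - c‖ := norm_add_le _ _
    rw [Metric.mem_closedBall, dist_eq_norm]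
    have h3 : κ * ‖x - c‖ ≤ (1/2) * r :=
      (mul_le_mul_of_nonneg_left hxr hκ0).trans (mul_le_mul_of_nonneg_right hκhalf hr.le)
    have h4 : K₁ * (K₂ * μ ^ α) ≤ (1/2) * r := by
      rw [hrdef, hCdef]; nlinarith
    linarith
  have hlipOn : LipschitzOnWith (1/2 : NNReal) A (Metric.closedBall c r) := by
    rw [lipschitzOnWith_iff_dist_le_mul]
    intro x hx y hy
    have := hAlip y hy x hx
    rw [dist_eq_norm, dist_eq_norm]
    calc ‖A x - A y‖ ≤ κ * ‖x - y‖ := this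
      _ ≤ ((1/2 : NNReal) : ℝ) * ‖x - y‖ := by
          push_cast
          exact mul_le_mul_of_nonneg_right hκhalf (norm_nonneg _)
  have hcontr : ContractingWith (1/2) (hmaps.restrict A _ _) :=
    ⟨by rw [← NNReal.coe_lt_coe]; norm_num, (hmaps.lipschitzOnWith_iff_restrict).mp hlipOn⟩
  obtain ⟨y, hys, hfix, -, -⟩ := hcontr.exists_fixedPoint'
    Metric.isClosed_closedBall.isComplete hmaps (Metric.mem_closedBall_self hr.le) (edist_ne_top _ _)
  have hyU : y ∈ U := hsU hys
  have h0 : Li μ (F₀ y μ + F₁ y μ) = 0 := by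
    have := hfix
    simp only [Function.IsFixedPt, hAdef, sub_eq_self] at this
    exact this
  have hFy : F₀ y μ + F₁ y μ = 0 := by
    have h := DFunLike.congr_fun hLi2 (F₀ y μ + F₁ y μ)
    simp only [ContinuousLinearMap.coe_comp', Function.comp_apply,
      ContinuousLinearMap.coe_id', id_eq] at h
    rw [← h, h0, map_zero]
  refine ⟨y, hyU, hFy, ?_⟩
  have := mem_closedBall_iff_norm.mp hys
  simpa [hrdef] using this
end
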